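/- (Miller's theorem.) Consider a three-term homogeneous recurrence a_{-1}(k)·x_{k-1} + a_0(k)·x_k + a_1(k)·x_{k+1} = 0 for integers k ≥ 2, with real coefficients satisfying a_{-1}(k) ≠ 0 and a_1(k) ≠ 0 for all k ≥ 2. Suppose {u_k}_{k≥1} is a solution which is minimal, i.e. there exists another solution {y_k}_{k≥1} with y_k ≠ 0 for all sufficiently large k and lim_{k→∞} u_k / y_k = 0, and suppose {u_k} satisfies a normalising condition ∑_{k=1}^{M} c_k u_k = S ≠ 0 for some finite M ≥ 1 and real numbers c_1,…,c_M. Fix d ≠ 0 and for each n > max(M,1) define x^{[n]}_{n+1} = 0, x^{[n]}_{n} = d, and x^{[n]}_{k-1} = −a_{-1}(k)^{-1}·(a_0(k)·x^{[n]}_k + a_1(k)·x^{[n]}_{k+1}) for n ≥ k ≥ 2, and put S_n = ∑_{k=1}^{M} c_k x^{[n]}_k. Then for all sufficiently large n one has S_n ≠ 0, and for each fixed k ≥ 1, lim_{n→∞} S_n^{-1}·S·x^{[n]}_k = u_k. -/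

import Mathlib

open Filter

/-- Miller's theorem: for a three-term homogeneous recurrence with a
minimal solution `u` satisfying a normalising condition, the Miller backward recursion
values `X n k`, after normalisation, converge to `u k` as `n → ∞`. -/
theorem miller_backward_recursion
    (am a0 a1 : ℕ → ℝ)
    (hcoef : ∀ k, 2 ≤ k → am k ≠ 0 ∧ a1 k ≠ 0)
    (u : ℕ → ℝ)
    (hu : ∀ k, 2 ≤ k → am k * u (k - 1) + a0 k * u k + a1 k * u (k + 1) = 0)
    (hmin : ∃ y : ℕ → ℝ,
      (∀ k, 2 ≤ k → am k * y (k - 1) + a0 k * y k + a1 k * y (k + 1) = 0) ∧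
      (∀ᶠ k in atTop, y k ≠ 0) ∧
      Tendsto (fun k => u k / y k) atTop (nhds 0))
    (M : ℕ) (hM : 1 ≤ M) (c : ℕ → ℝ) (S : ℝ)
    (hS : S = ∑ k ∈ Finset.Icc 1 M, c k * u k) (hS0 : S ≠ 0)
    (d : ℝ) (hd : d ≠ 0)
    (X : ℕ → ℕ → ℝ)
    (hXtop : ∀ n, max M 1 < n → X n (n + 1) = 0)
    (hXn : ∀ n, max M 1 < n → X n n = d)
    (hXrec : ∀ n, max M 1 < n → ∀ k, 2 ≤ k → k ≤ n →
      X n (k - 1) = -(am k)⁻¹ * (a0 k * X n k + a1 k * X n (k + 1)))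
    (Sn : ℕ → ℝ) (hSn : ∀ n, Sn n = ∑ k ∈ Finset.Icc 1 M, c k * X n k) :
    (∀ᶠ n in atTop, Sn n ≠ 0) ∧
    ∀ k, 1 ≤ k → Tendsto (fun n => (Sn n)⁻¹ * S * X n k) atTop (nhds (u k)) := by
  obtain ⟨y, hy, hyne, hylim⟩ := hmin
  set D : ℕ → ℝ := fun k => u k * y (k + 1) - u (k + 1) * y k with hD
  obtain ⟨N, hN⟩ := eventually_atTop.mp hyne
  -- Casoratian step relation
  have hstep : ∀ k, 1 ≤ k → am (k + 1) * D k = a1 (k + 1) * D (k + 1) := by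
    intro k hk
    have h1 := hu (k + 1) (by omega)
    have h2 := hy (k + 1) (by omega)
    have e : k + 1 - 1 = k := by omega
    rw [e] at h1 h2
    simp only [hD]
    linear_combination y (k + 1) * h1 - u (k + 1) * h2
  -- D 1 ≠ 0
  have hD1 : D 1 ≠ 0 := by
    intro hzero
    have hDk : ∀ k, 1 ≤ k → D k = 0 := by
      intro k hk
      induction k, hk using Nat.le_induction with
      | base => exact hzero
      | succ k hk ih =>
        have h := hstep k hk
        rw [ih] at h
        have ha1 := (hcoef (k + 1) (by omega)).2
        have h2 : a1 (k + 1) * D (k + 1) = 0 := by linarith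
        exact (mul_eq_zero.mp h2).resolve_left ha1
    -- ratio eventually constant
    set N' := max N 2 with hN'
    have hconst : ∀ k, N' ≤ k → u k / y k = u N' / y N' := by
      intro k hk
      induction k, hk using Nat.le_induction with
      | base => rfl
      | succ k hk ih =>
        rw [← ih]
        have hyk : y k ≠ 0 := hN k (le_trans (le_max_left N 2) hk)
        have hyk1 : y (k + 1) ≠ 0 := hN (k + 1) (by omega)
        have hDk0 : D k = 0 := hDk k (by omega)
        have : u k * y (k + 1) = u (k + 1) * y k := by
          simp only [hD] at hDk0; linarith
        rw [div_eq_div_iff hyk1 hyk]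
        linarith
    have hconst0 : u N' / y N' = 0 := by
      have h1 : Tendsto (fun k => u k / y k) atTop (nhds (u N' / y N')) := by
        apply Tendsto.congr' _ tendsto_const_nhds
        filter_upwards [eventually_ge_atTop N'] with k hk using (hconst k hk).symm
      exact tendsto_nhds_unique h1 hylim
    have huzero_top : ∀ k, N' ≤ k → u k = 0 := by
      intro k hk
      have h := hconst k hk
      rw [hconst0] at h
      have hyk : y k ≠ 0 := hN k (le_trans (le_max_left N 2) hk)
      exact (div_eq_zero_iff.mp h).resolve_right hyk
    -- backward propagation of zeros
    have huzero : ∀ j k, 1 ≤ k → N' ≤ k + j → u k = 0 := by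
      intro j
      induction j with
      | zero => intro k hk h; exact huzero_top k (by omega)
      | succ j ih =>
        intro k hk h
        by_cases hc : N' ≤ k + j
        · exact ih k hk hc
        · have h1 := hu (k + 1) (by omega)
          have e : k + 1 - 1 = k := by omega
          rw [e] at h1
          have hz1 : u (k + 1) = 0 := ih (k + 1) (by omega) (by omega)
          have hz2 : u (k + 2) = 0 := ih (k + 2) (by omega) (by omega)
          rw [hz1, hz2] at h1
          have ham := (hcoef (k + 1) (by omega)).1
          have : am (k + 1) * u k = 0 := by linarith
          exact (mul_eq_zero.mp this).resolve_left ham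
    have : S = 0 := by
      rw [hS]
      apply Finset.sum_eq_zero
      intro k hk
      simp only [Finset.mem_Icc] at hk
      rw [huzero N' k hk.1 (by omega), mul_zero]
    exact hS0 this
  have hDne : ∀ k, 1 ≤ k → D k ≠ 0 := by
    intro k hk
    induction k, hk using Nat.le_induction with
    | base => exact hD1
    | succ k hk ih =>
      have h := hstep k hk
      have ham := (hcoef (k + 1) (by omega)).1
      have ha1 := (hcoef (k + 1) (by omega)).2
      intro hz
      rw [hz, mul_zero] at h
      exact (mul_ne_zero ham ih) h
  -- main construction
  set N0 := max (max N 2) (max M 1 + 1) with hN0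
  set α : ℕ → ℝ := fun n => d * y (n + 1) / D n with hα
  set β : ℕ → ℝ := fun n => -(d * u (n + 1) / D n) with hβ
  have hrep : ∀ n, N0 ≤ n → ∀ k, 1 ≤ k → k ≤ n + 1 →
      X n k = α n * u k + β n * y k := by
    intro n hn
    have hnM : max M 1 < n := by omega
    have hDn : D n ≠ 0 := hDne n (by omega)
    suffices h : ∀ j k, 1 ≤ k → k + j = n + 1 → X n k = α n * u k + β n * y k by
      intro k hk1 hk2
      exact h (n + 1 - k) k hk1 (by omega)
    intro j
    induction j using Nat.strong_induction_on with
    | _ j ih =>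
      intro k hk1 hkj
      match j, hkj with
      | 0, hkj =>
        have : k = n + 1 := by omega
        subst this
        rw [hXtop n hnM]
        simp only [hα, hβ]
        ring
      | 1, hkj =>
        have hkn : k = n := by omega
        rw [hkn, hXn n hnM]
        simp only [hα, hβ]
        field_simp
        simp only [hD]
        ring
      | (j + 2), hkj =>
        have h1 : X n (k + 1) = α n * u (k + 1) + β n * y (k + 1) :=
          ih (j + 1) (by omega) (k + 1) (by omega) (by omega)
        have h2 : X n (k + 2) = α n * u (k + 2) + β n * y (k + 2) :=
          ih j (by omega) (k + 2) (by omega) (by omega)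
        have hrec := hXrec n hnM (k + 1) (by omega) (by omega)
        have e : k + 1 - 1 = k := by omega
        rw [e] at hrec
        have hu1 := hu (k + 1) (by omega)
        have hy1 := hy (k + 1) (by omega)
        rw [e] at hu1 hy1
        have ham := (hcoef (k + 1) (by omega)).1
        rw [hrec, h1, h2]
        field_simp
        linear_combination (-(α n)) * hu1 - β n * hy1
  set T : ℝ := ∑ k ∈ Finset.Icc 1 M, c k * y k with hT
  have hSnrep : ∀ n, N0 ≤ n → Sn n = α n * S + β n * T := by
    intro n hn
    have : Sn n = ∑ k ∈ Finset.Icc 1 M, (α n * (c k * u k) + β n * (c k * y k)) := by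
      rw [hSn]
      apply Finset.sum_congr rfl
      intro k hk
      simp only [Finset.mem_Icc] at hk
      rw [hrep n hn k hk.1 (by omega)]
      ring
    rw [this, Finset.sum_add_distrib, ← Finset.mul_sum, ← Finset.mul_sum, ← hS, ← hT]
  set r : ℕ → ℝ := fun n => -(u (n + 1) / y (n + 1)) with hr
  have hrlim : Tendsto r atTop (nhds 0) := by
    have : Tendsto (fun n => u (n + 1) / y (n + 1)) atTop (nhds 0) :=
      hylim.comp (tendsto_add_atTop_nat 1)
    simpa using this.neg
  have hβr : ∀ n, N0 ≤ n → β n = r n * α n := by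
    intro n hn
    have hyn1 : y (n + 1) ≠ 0 := hN (n + 1) (by omega)
    have hDn : D n ≠ 0 := hDne n (by omega)
    simp only [hβ, hα, hr]
    field_simp
  have hαne : ∀ n, N0 ≤ n → α n ≠ 0 := by
    intro n hn
    have hyn1 : y (n + 1) ≠ 0 := hN (n + 1) (by omega)
    have hDn : D n ≠ 0 := hDne n (by omega)
    simp only [hα]
    exact div_ne_zero (mul_ne_zero hd hyn1) hDn
  have hden : Tendsto (fun n => S + r n * T) atTop (nhds S) := by
    have h1 : Tendsto (fun n => r n * T) atTop (nhds 0) := by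
      have := hrlim.mul_const T
      rwa [zero_mul] at this
    simpa using (tendsto_const_nhds (x := S)).add h1
  have hdne : ∀ᶠ n in atTop, S + r n * T ≠ 0 := hden.eventually_ne hS0
  have hSnfac : ∀ n, N0 ≤ n → Sn n = α n * (S + r n * T) := by
    intro n hn
    rw [hSnrep n hn, hβr n hn]
    ring
  constructor
  · filter_upwards [eventually_ge_atTop N0, hdne] with n hn hne
    rw [hSnfac n hn]
    exact mul_ne_zero (hαne n hn) hne
  · intro k hk
    have key : ∀ᶠ n in atTop, (Sn n)⁻¹ * S * X n k
        = S * (u k + r n * y k) / (S + r n * T) := by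
      filter_upwards [eventually_ge_atTop N0, eventually_ge_atTop k, hdne] with n hn hnk hne
      rw [hSnfac n hn, hrep n hn k hk (by omega), hβr n hn]
      have hα0 := hαne n hn
      field_simp
    have lim : Tendsto (fun n => S * (u k + r n * y k) / (S + r n * T)) atTop
        (nhds (u k)) := by
      have hnum : Tendsto (fun n => S * (u k + r n * y k)) atTop (nhds (S * u k)) := by
        have h0 : Tendsto (fun n => r n * y k) atTop (nhds 0) := by
          have := hrlim.mul_const (y k)
          rwa [zero_mul] at this
        have h1 : Tendsto (fun n => u k + r n * y k) atTop (nhds (u k)) := by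
          simpa using (tendsto_const_nhds (x := u k)).add h0
        simpa using h1.const_mul S
      have h2 := hnum.div hden hS0
      rw [mul_comm, mul_div_assoc, div_self hS0, mul_one] at h2
      exact h2
    exact lim.congr' (key.mono fun n h => h.symm)
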